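/- For all real a, b > 0, the function z ↦ 1/|P(z)| is Lebesgue-integrable on ℂ, and the polar-coordinates identity ∫_ℂ |P(z)|⁻¹ dℓ(z) = (1/(ab)) · ∫₀^∞ F(r/a, r/b) dr holds; in particular C_P := ∫_ℂ |P(z)|⁻¹ dℓ(z) is finite. -/

import Mathlib

open MeasureTheory Real

/-- `F(α, β) = ∫₀^{2π} (|α e^{iθ} − 1| · |β e^{iθ} + 1|)⁻¹ dθ`, as a value in `[0, ∞]`. -/
noncomputable def Ffun (α β : ℝ) : ENNReal :=
  ∫⁻ θ in Set.Icc (0:ℝ) (2 * Real.pi),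
    ENNReal.ofReal
      ((‖(α * Complex.exp (Complex.I * θ) - 1 : ℂ)‖ *
        ‖(β * Complex.exp (Complex.I * θ) + 1 : ℂ)‖)⁻¹)

open Set
open scoped ENNReal

theorem my_lintegral_comp_polarCoord_symm (f : ℝ × ℝ → ENNReal) :
    (∫⁻ p in polarCoord.target, ENNReal.ofReal p.1 * f (polarCoord.symm p)) = ∫⁻ p, f p := by
  set B : ℝ × ℝ → ℝ × ℝ →L[ℝ] ℝ × ℝ := fun p =>
    LinearMap.toContinuousLinearMap (Matrix.toLin (Module.Basis.finTwoProd ℝ) (Module.Basis.finTwoProd ℝ)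
      !![Real.cos p.2, -p.1 * Real.sin p.2; Real.sin p.2, p.1 * Real.cos p.2])
  have B_det : ∀ p, (B p).det = p.1 := by
    intro p
    conv_rhs => rw [← one_mul p.1, ← cos_sq_add_sin_sq p.2]
    simp only [B, neg_mul, LinearMap.det_toContinuousLinearMap, LinearMap.det_toLin,
      Matrix.det_fin_two_of, sub_neg_eq_add]
    ring
  symm
  calc
    ∫⁻ p, f p = ∫⁻ p in polarCoord.source, f p := by
      rw [← setLIntegral_univ]
      exact setLIntegral_congr polarCoord_source_ae_eq_univ.symm
    _ = ∫⁻ p in polarCoord.symm '' polarCoord.target, f p := by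
      rw [polarCoord.symm_image_target_eq_source]
    _ = ∫⁻ p in polarCoord.target, ENNReal.ofReal |(B p).det| * f (polarCoord.symm p) := by
      apply lintegral_image_eq_lintegral_abs_det_fderiv_mul volume
        polarCoord.open_target.measurableSet
        (fun p _ => (hasFDerivAt_polarCoord_symm p).hasFDerivWithinAt)
        polarCoord.symm.injOn
    _ = ∫⁻ p in polarCoord.target, ENNReal.ofReal p.1 * f (polarCoord.symm p) := by
      refine setLIntegral_congr_fun polarCoord.open_target.measurableSet
        (fun x hx => ?_)
      rw [B_det, abs_of_pos hx.1]

theorem myC_lintegral_comp_polarCoord_symm (f : ℂ → ENNReal) :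
    (∫⁻ p in polarCoord.target, ENNReal.ofReal p.1 * f (Complex.polarCoord.symm p)) = ∫⁻ z, f z := by
  rw [← (Complex.volume_preserving_equiv_real_prod.symm).lintegral_comp_emb
    Complex.measurableEquivRealProd.symm.measurableEmbedding, ← my_lintegral_comp_polarCoord_symm]
  rfl

theorem integrable_indicator_inv_norm_ball (R : ℝ) :
    Integrable ((Metric.ball (0:ℂ) R).indicator fun z => ‖z‖⁻¹) volume := by
  have hnn : ∀ z : ℂ, (0:ℝ) ≤ (Metric.ball (0:ℂ) R).indicator (fun z => ‖z‖⁻¹) z :=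
    fun z => Set.indicator_nonneg (fun w _ => inv_nonneg.2 (norm_nonneg w)) z
  have hmeas : Measurable ((Metric.ball (0:ℂ) R).indicator fun z : ℂ => ‖z‖⁻¹) :=
    (continuous_norm.measurable.inv).indicator measurableSet_ball
  refine ⟨hmeas.aestronglyMeasurable, ?_⟩
  rw [hasFiniteIntegral_def]
  have hrw : ∀ z : ℂ, ‖(Metric.ball (0:ℂ) R).indicator (fun z => ‖z‖⁻¹) z‖ₑ
      = ENNReal.ofReal ((Metric.ball (0:ℂ) R).indicator (fun z => ‖z‖⁻¹) z) :=
    fun z => Real.enorm_eq_ofReal (hnn z)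
  simp_rw [hrw]
  rw [← myC_lintegral_comp_polarCoord_symm]
  have hle : ∀ p ∈ polarCoord.target,
      ENNReal.ofReal p.1 * ENNReal.ofReal
        ((Metric.ball (0:ℂ) R).indicator (fun z => ‖z‖⁻¹) (Complex.polarCoord.symm p))
      ≤ (Set.Ioo (0:ℝ) R ×ˢ Set.Ioo (-π) π).indicator (fun _ => (1:ENNReal)) p := by
    rintro ⟨r, θ⟩ ⟨hr, hθ⟩
    have habs : ‖Complex.polarCoord.symm (r, θ)‖ = r := by
      rw [Complex.norm_polarCoord_symm, abs_of_pos hr]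
    by_cases hrR : r < R
    · have hmem : Complex.polarCoord.symm (r, θ) ∈ Metric.ball (0:ℂ) R := by
        rw [Metric.mem_ball, dist_zero_right, habs]; exact hrR
      rw [Set.indicator_of_mem hmem, habs, Set.indicator_of_mem (by exact ⟨⟨hr, hrR⟩, hθ⟩),
        ← ENNReal.ofReal_mul hr.le, mul_inv_cancel₀ hr.ne']
      simp
    · have hmem : Complex.polarCoord.symm (r, θ) ∉ Metric.ball (0:ℂ) R := by
        rw [Metric.mem_ball, dist_zero_right, habs]; exact fun h => hrR h
      rw [Set.indicator_of_notMem hmem]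
      simp
  calc ∫⁻ p in polarCoord.target, ENNReal.ofReal p.1 * ENNReal.ofReal
        ((Metric.ball (0:ℂ) R).indicator (fun z => ‖z‖⁻¹) (Complex.polarCoord.symm p))
      ≤ ∫⁻ p in polarCoord.target,
        (Set.Ioo (0:ℝ) R ×ˢ Set.Ioo (-π) π).indicator (fun _ => (1:ENNReal)) p := by
        exact setLIntegral_mono (measurable_const.indicator
          ((measurableSet_Ioo.prod measurableSet_Ioo))) hle
    _ ≤ ∫⁻ p, (Set.Ioo (0:ℝ) R ×ˢ Set.Ioo (-π) π).indicator (fun _ => (1:ENNReal)) p :=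
        setLIntegral_le_lintegral _ _
    _ = volume (Set.Ioo (0:ℝ) R ×ˢ Set.Ioo (-π) π) := by
        rw [lintegral_indicator (measurableSet_Ioo.prod measurableSet_Ioo)]
        simp
    _ < ∞ := by
        rw [Measure.volume_eq_prod, Measure.prod_prod]
        exact ENNReal.mul_lt_top (by simp) (by simp)

theorem integrableOn_inv_norm_sub_ball (c : ℂ) (R : ℝ) :
    IntegrableOn (fun z : ℂ => ‖z - c‖⁻¹) (Metric.ball c R) volume := by
  rw [← integrable_indicator_iff measurableSet_ball]
  have h0 := integrable_indicator_inv_norm_ball R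
  have h1 : Integrable (fun z : ℂ =>
      (Metric.ball (0:ℂ) R).indicator (fun w => ‖w‖⁻¹) (z - c)) volume :=
    ((measurePreserving_sub_right volume c).integrable_comp_emb
      (MeasurableEquiv.subRight c).measurableEmbedding).mpr h0
  convert h1 using 1
  · rfl
  funext z
  by_cases hz : z ∈ Metric.ball c R
  · rw [Set.indicator_of_mem hz, Set.indicator_of_mem (by
      rw [Metric.mem_ball, dist_zero_right]
      rwa [Metric.mem_ball, dist_eq_norm] at hz )]
  · rw [Set.indicator_of_notMem hz, Set.indicator_of_notMem (by
      rw [Metric.mem_ball, dist_zero_right]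
      rwa [Metric.mem_ball, dist_eq_norm] at hz )]

lemma inv_mul_le_aux {u v m : ℝ} (hu : 0 ≤ u) (hm : 0 < m) (h : m ≤ v) :
    (u * v)⁻¹ ≤ m⁻¹ * u⁻¹ := by
  rw [mul_inv, mul_comm]
  exact mul_le_mul_of_nonneg_right (inv_anti₀ hm h) (inv_nonneg.2 hu)

theorem integrable_invP (a b : ℝ) (ha : 0 < a) (hb : 0 < b) :
    Integrable (fun z : ℂ => (‖z * (z - (a:ℂ)) * (z + (b:ℂ))‖)⁻¹) volume := by
  set g : ℂ → ℝ := fun z : ℂ => (‖z * (z - (a:ℂ)) * (z + (b:ℂ))‖)⁻¹ with hg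
  have habs : ∀ z : ℂ, ‖z * (z - (a:ℂ)) * (z + (b:ℂ))‖
      = ‖z‖ * (‖z - (a:ℂ)‖ * ‖z + (b:ℂ)‖) := by
    intro z
    simp only [norm_mul]
    ring
  have hgnn : ∀ z, 0 ≤ g z := fun z => inv_nonneg.2 (norm_nonneg _)
  have hgz : ∀ z : ℂ, g z = (‖z‖ * (‖z - (a:ℂ)‖ * ‖z + (b:ℂ)‖))⁻¹ :=
    fun z => by simp only [hg, habs]
  have hgm : AEStronglyMeasurable g volume := by
    have : Continuous fun z : ℂ => ‖z * (z - (a:ℂ)) * (z + (b:ℂ))‖ := by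
      continuity
    exact this.measurable.inv.aestronglyMeasurable
  set d : ℝ := min (a/2) (b/2) with hd
  have hd0 : 0 < d := lt_min (by linarith) (by linarith)
  have hda : d ≤ a/2 := min_le_left _ _
  have hdb : d ≤ b/2 := min_le_right _ _
  set R : ℝ := 2*(a+b)+1 with hR
  have hna : ‖(a:ℂ)‖ = a := by rw [Complex.norm_real, Real.norm_eq_abs, abs_of_pos ha]
  have hnb : ‖(-b:ℂ)‖ = b := by
    rw [norm_neg, Complex.norm_real, Real.norm_eq_abs, abs_of_pos hb]
  have hm0 : (0:ℝ) < (a/2) * (b/2) := by positivity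
  -- piece 1 : ball 0 d
  have p1 : IntegrableOn g (Metric.ball (0:ℂ) d) volume := by
    refine Integrable.mono' (((integrableOn_inv_norm_sub_ball 0 d)).const_mul
      ((a/2)*(b/2))⁻¹) hgm.restrict ?_
    rw [ae_restrict_iff' measurableSet_ball]
    refine Filter.Eventually.of_forall fun z hz => ?_
    rw [Metric.mem_ball, dist_zero_right] at hz
    rw [Real.norm_eq_abs, abs_of_nonneg (hgnn z), hgz]
    have h1 := (abs_le.1 (abs_norm_sub_norm_le z (a:ℂ))).1
    have h2 := (abs_le.1 (abs_norm_sub_norm_le z (-b:ℂ))).1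
    rw [hna] at h1
    rw [hnb, sub_neg_eq_add] at h2
    have hya : a/2 ≤ ‖z - (a:ℂ)‖ := by linarith
    have hyb : b/2 ≤ ‖z + (b:ℂ)‖ := by linarith
    have : (a/2)*(b/2) ≤ ‖z - (a:ℂ)‖ * ‖z + (b:ℂ)‖ :=
      mul_le_mul hya hyb (by linarith) (norm_nonneg _)
    rw [sub_zero]
    exact inv_mul_le_aux (norm_nonneg z) hm0 this
  -- piece 2 : ball a d
  have p2 : IntegrableOn g (Metric.ball ((a:ℂ)) d) volume := by
    refine Integrable.mono' (((integrableOn_inv_norm_sub_ball (a:ℂ) d)).const_mul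
      ((a/2)*(b/2))⁻¹) hgm.restrict ?_
    rw [ae_restrict_iff' measurableSet_ball]
    refine Filter.Eventually.of_forall fun z hz => ?_
    rw [Metric.mem_ball, dist_eq_norm] at hz
    rw [Real.norm_eq_abs, abs_of_nonneg (hgnn z), hgz]
    have h1 := (abs_le.1 (abs_norm_sub_norm_le z (a:ℂ))).1
    rw [hna] at h1
    have hx : a/2 ≤ ‖z‖ := by linarith
    have e1 : (z + (b:ℂ)) - ((a:ℂ) + (b:ℂ)) = z - (a:ℂ) := by ring
    have h2 := (abs_le.1 (abs_norm_sub_norm_le (z + (b:ℂ)) ((a:ℂ) + (b:ℂ)))).1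
    rw [e1] at h2
    have hnab : ‖(a:ℂ) + (b:ℂ)‖ = a + b := by
      rw [← Complex.ofReal_add, Complex.norm_real, Real.norm_eq_abs, abs_of_pos (by linarith)]
    rw [hnab] at h2
    have hw : b/2 ≤ ‖z + (b:ℂ)‖ := by linarith
    have : (a/2)*(b/2) ≤ ‖z‖ * ‖z + (b:ℂ)‖ :=
      mul_le_mul hx hw (by linarith) (norm_nonneg _)
    have e2 : ∀ x y w : ℝ, x * (y * w) = y * (x * w) := by intros; ring
    rw [e2]
    exact inv_mul_le_aux (norm_nonneg _) hm0 this
  -- piece 3 : ball (-b) d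
  have p3 : IntegrableOn g (Metric.ball ((-b:ℂ)) d) volume := by
    refine Integrable.mono' (((integrableOn_inv_norm_sub_ball ((-b:ℂ)) d)).const_mul
      ((a/2)*(b/2))⁻¹) hgm.restrict ?_
    rw [ae_restrict_iff' measurableSet_ball]
    refine Filter.Eventually.of_forall fun z hz => ?_
    rw [Metric.mem_ball, dist_eq_norm] at hz
    have e0 : z - (-b:ℂ) = z + (b:ℂ) := by ring
    rw [e0] at hz
    rw [Real.norm_eq_abs, abs_of_nonneg (hgnn z), hgz]
    have h1 := (abs_le.1 (abs_norm_sub_norm_le z (-b:ℂ))).1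
    rw [hnb, e0] at h1
    have hx : b/2 ≤ ‖z‖ := by linarith
    have e1 : (z - (a:ℂ)) - (-((a:ℂ) + (b:ℂ))) = z + (b:ℂ) := by ring
    have h2 := (abs_le.1 (abs_norm_sub_norm_le (z - (a:ℂ)) (-((a:ℂ) + (b:ℂ))))).1
    rw [e1] at h2
    have hnab : ‖-((a:ℂ) + (b:ℂ))‖ = a + b := by
      rw [norm_neg, ← Complex.ofReal_add, Complex.norm_real, Real.norm_eq_abs, abs_of_pos (by linarith)]
    rw [hnab] at h2
    have hy : a/2 ≤ ‖z - (a:ℂ)‖ := by linarith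
    have : (b/2)*(a/2) ≤ ‖z‖ * ‖z - (a:ℂ)‖ :=
      mul_le_mul hx hy (by linarith) (norm_nonneg _)
    have e2 : ∀ x y w : ℝ, x * (y * w) = w * (x * y) := by intros; ring
    rw [e2]
    calc (‖z + (b:ℂ)‖ * (‖z‖ * ‖z - (a:ℂ)‖))⁻¹
        ≤ ((b/2)*(a/2))⁻¹ * ‖z + (b:ℂ)‖⁻¹ :=
          inv_mul_le_aux (norm_nonneg _) (by positivity) this
      _ = ((a/2)*(b/2))⁻¹ * ‖z - (-b:ℂ)‖⁻¹ := by rw [e0, mul_comm (b/2)]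
  -- piece 4 : middle
  have p4 : IntegrableOn g (Metric.ball (0:ℂ) R \
      (Metric.ball (0:ℂ) d ∪ Metric.ball ((a:ℂ)) d ∪ Metric.ball ((-b:ℂ)) d)) volume := by
    have hconst : IntegrableOn (fun _ : ℂ => (d*(d*d))⁻¹)
        (Metric.ball (0:ℂ) R \
          (Metric.ball (0:ℂ) d ∪ Metric.ball ((a:ℂ)) d ∪ Metric.ball ((-b:ℂ)) d)) volume := by
      exact integrableOn_const (lt_of_le_of_lt (measure_mono Set.diff_subset) measure_ball_lt_top).ne
    refine Integrable.mono' hconst hgm.restrict ?_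
    rw [ae_restrict_iff' ((measurableSet_ball).diff
      (((measurableSet_ball).union measurableSet_ball).union measurableSet_ball))]
    refine Filter.Eventually.of_forall fun z hz => ?_
    obtain ⟨-, hz2⟩ := hz
    simp only [Set.mem_union, Metric.mem_ball, not_or, not_lt] at hz2
    obtain ⟨⟨hz0, hza⟩, hzb⟩ := hz2
    rw [dist_zero_right] at hz0
    rw [dist_eq_norm] at hza hzb
    have e0 : z - (-b:ℂ) = z + (b:ℂ) := by ring
    rw [e0] at hzb
    rw [Real.norm_eq_abs, abs_of_nonneg (hgnn z), hgz]
    have h1 : d * (d * d) ≤ ‖z‖ * (‖z - (a:ℂ)‖ * ‖z + (b:ℂ)‖) := by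
      have := mul_le_mul hza hzb hd0.le (le_trans hd0.le hza)
      exact mul_le_mul hz0 this (by positivity) (norm_nonneg _)
    exact inv_anti₀ (by positivity) h1
  -- piece 5 : outer
  have p5 : IntegrableOn g {z : ℂ | R ≤ ‖z‖} volume := by
    have hint : Integrable (fun z : ℂ => 32 * (1 + ‖z‖) ^ (-(3:ℝ))) volume := by
      refine Integrable.const_mul ?_ 32
      exact integrable_one_add_norm (by norm_num [Complex.finrank_real_complex])
    refine Integrable.mono' hint.integrableOn hgm.restrict ?_
    rw [ae_restrict_iff' (measurableSet_le measurable_const continuous_norm.measurable)]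
    refine Filter.Eventually.of_forall fun z hz => ?_
    simp only [Set.mem_setOf_eq] at hz
    rw [Real.norm_eq_abs, abs_of_nonneg (hgnn z), hgz]
    have h1 := (abs_le.1 (abs_norm_sub_norm_le z (a:ℂ))).2
    have h2 := (abs_le.1 (abs_norm_sub_norm_le z (-b:ℂ))).2
    rw [hna] at h1
    rw [hnb, sub_neg_eq_add] at h2
    have hn1 : (1:ℝ) ≤ ‖z‖ := by simp only [hR] at hz; linarith
    have hx : (1 + ‖z‖)/2 ≤ ‖z‖ := by linarith
    have hy : (1 + ‖z‖)/4 ≤ ‖z - (a:ℂ)‖ := by simp only [hR] at hz; linarith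
    have hw : (1 + ‖z‖)/4 ≤ ‖z + (b:ℂ)‖ := by simp only [hR] at hz; linarith
    have hkey : (1 + ‖z‖)^(3:ℕ) / 32 ≤ ‖z‖ * (‖z - (a:ℂ)‖ * ‖z + (b:ℂ)‖) := by
      have h3 : (1 + ‖z‖)/4 * ((1 + ‖z‖)/4) ≤ ‖z - (a:ℂ)‖ * ‖z + (b:ℂ)‖ :=
        mul_le_mul hy hw (by positivity) (norm_nonneg _)
      have h4 := mul_le_mul hx h3 (by positivity) (norm_nonneg _)
      calc (1 + ‖z‖)^(3:ℕ) / 32 = (1 + ‖z‖)/2 * ((1 + ‖z‖)/4 * ((1 + ‖z‖)/4)) := by ring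
        _ ≤ _ := h4
    calc (‖z‖ * (‖z - (a:ℂ)‖ * ‖z + (b:ℂ)‖))⁻¹
        ≤ ((1 + ‖z‖)^(3:ℕ) / 32)⁻¹ := inv_anti₀ (by positivity) hkey
      _ = 32 * (1 + ‖z‖) ^ (-(3:ℝ)) := by
          rw [Real.rpow_neg (by positivity), ← Real.rpow_natCast (1 + ‖z‖) 3]
          push_cast
          field_simp
  -- combine
  rw [← integrableOn_univ]
  have hun := ((((p1.union p2).union p3).union p4).union p5)
  refine hun.mono_set fun z _ => ?_
  by_cases h5 : R ≤ ‖z‖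
  · exact Or.inr h5
  · left
    by_cases h1 : z ∈ Metric.ball (0:ℂ) d
    · exact Or.inl (Or.inl (Or.inl h1))
    by_cases h2 : z ∈ Metric.ball ((a:ℂ)) d
    · exact Or.inl (Or.inl (Or.inr h2))
    by_cases h3 : z ∈ Metric.ball ((-b:ℂ)) d
    · exact Or.inl (Or.inr h3)
    · refine Or.inr ⟨?_, ?_⟩
      · rw [Metric.mem_ball, dist_zero_right]; linarith [not_le.1 h5]
      · simp only [Set.mem_union]
        tauto

theorem lintegral_Ioo_shift (H : ℝ → ENNReal) (hHm : Measurable H)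
    (hper : ∀ θ, H (θ + 2*π) = H θ) :
    ∫⁻ θ in Set.Ioo (-π) π, H θ = ∫⁻ θ in Set.Icc 0 (2*π), H θ := by
  have hpi := Real.pi_pos
  have h1 : ∫⁻ θ in Set.Icc 0 (2*π), H θ = ∫⁻ θ in Set.Ico 0 (2*π), H θ :=
    (setLIntegral_congr Ico_ae_eq_Icc).symm
  have h2 : ∫⁻ θ in Set.Ioo (-π) π, H θ = ∫⁻ θ in Set.Ico (-π) π, H θ :=
    setLIntegral_congr Ioo_ae_eq_Ico
  have htrans : ∫⁻ θ in Set.Ico π (2*π), H θ = ∫⁻ θ in Set.Ico (-π) 0, H θ := by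
    have e1 : ∫⁻ θ in Set.Ico π (2*π), H θ
        = ∫⁻ θ, (Set.Ico π (2*π)).indicator H θ := (lintegral_indicator measurableSet_Ico H).symm
    have e2 : ∫⁻ θ in Set.Ico (-π) 0, H θ
        = ∫⁻ θ, (Set.Ico (-π) 0).indicator H θ := (lintegral_indicator measurableSet_Ico H).symm
    rw [e1, e2]
    rw [← (measurePreserving_add_right volume (2*π)).lintegral_comp_emb
      (MeasurableEquiv.addRight (2*π)).measurableEmbedding ((Set.Ico π (2*π)).indicator H)]
    congr 1
    funext θ
    by_cases hθ : θ ∈ Set.Ico (-π) 0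
    · rw [Set.indicator_of_mem hθ]
      have : θ + 2*π ∈ Set.Ico π (2*π) := by
        simp only [Set.mem_Ico] at *
        constructor <;> linarith [hθ.1, hθ.2]
      rw [Set.indicator_of_mem this, hper]
    · rw [Set.indicator_of_notMem hθ]
      have : θ + 2*π ∉ Set.Ico π (2*π) := by
        simp only [Set.mem_Ico] at *
        intro h
        exact hθ ⟨by linarith [h.1], by linarith [h.2]⟩
      rw [Set.indicator_of_notMem this]
  have hsplit1 : ∫⁻ θ in Set.Ico 0 (2*π), H θ
      = (∫⁻ θ in Set.Ico 0 π, H θ) + ∫⁻ θ in Set.Ico π (2*π), H θ := by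
    rw [← Set.Ico_union_Ico_eq_Ico hpi.le (by linarith), lintegral_union measurableSet_Ico
      (Set.Ico_disjoint_Ico_same)]
  have hsplit2 : ∫⁻ θ in Set.Ico (-π) π, H θ
      = (∫⁻ θ in Set.Ico (-π) 0, H θ) + ∫⁻ θ in Set.Ico 0 π, H θ := by
    rw [← Set.Ico_union_Ico_eq_Ico (by linarith) hpi.le, lintegral_union measurableSet_Ico
      (Set.Ico_disjoint_Ico_same)]
  rw [h1, h2, hsplit1, hsplit2, htrans, add_comm]

theorem key_lintegral (a b : ℝ) (ha : 0 < a) (hb : 0 < b) :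
    ∫⁻ z : ℂ, ENNReal.ofReal ((‖z * (z - (a:ℂ)) * (z + (b:ℂ))‖)⁻¹)
      = ENNReal.ofReal ((a*b)⁻¹) * ∫⁻ r in Set.Ioi (0:ℝ), Ffun (r/a) (r/b) := by
  set K : ℝ → ℝ → ENNReal := fun r θ =>
    ENNReal.ofReal
      ((‖(r/a : ℝ) * Complex.exp (Complex.I * θ) - 1‖ *
        ‖(r/b : ℝ) * Complex.exp (Complex.I * θ) + 1‖)⁻¹) with hKdef
  have hsymm : ∀ r θ : ℝ, Complex.polarCoord.symm (r, θ) = (r:ℂ) * Complex.exp (Complex.I * θ) := by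
    intro r θ
    rw [Complex.polarCoord_symm_apply, mul_comm Complex.I (θ:ℂ), Complex.exp_mul_I,
      ← Complex.ofReal_cos, ← Complex.ofReal_sin]
  have hpoint : ∀ r : ℝ, 0 < r → ∀ θ : ℝ,
      ENNReal.ofReal r * ENNReal.ofReal
        ((‖((r:ℂ) * Complex.exp (Complex.I * θ)) *
          (((r:ℂ) * Complex.exp (Complex.I * θ)) - (a:ℂ)) *
          (((r:ℂ) * Complex.exp (Complex.I * θ)) + (b:ℂ))‖)⁻¹)
      = ENNReal.ofReal ((a*b)⁻¹) * K r θ := by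
    intro r hr θ
    set E := Complex.exp (Complex.I * θ) with hE
    have hEabs : ‖E‖ = 1 := by rw [hE, mul_comm]; exact Complex.norm_exp_ofReal_mul_I θ
    have hza : (r:ℂ)*E - (a:ℂ) = (a:ℂ) * (((r/a : ℝ):ℂ) * E - 1) := by
      rw [mul_sub, mul_one, ← mul_assoc, ← Complex.ofReal_mul, mul_div_cancel₀ _ ha.ne']
    have hzb : (r:ℂ)*E + (b:ℂ) = (b:ℂ) * (((r/b : ℝ):ℂ) * E + 1) := by
      rw [mul_add, mul_one, ← mul_assoc, ← Complex.ofReal_mul, mul_div_cancel₀ _ hb.ne']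
    set X := ‖((r/a : ℝ):ℂ) * E - 1‖ with hX
    set Y := ‖((r/b : ℝ):ℂ) * E + 1‖ with hY
    have habs : ‖((r:ℂ)*E) * (((r:ℂ)*E) - (a:ℂ)) * (((r:ℂ)*E) + (b:ℂ))‖
        = r * (a * X) * (b * Y) := by
      rw [norm_mul, norm_mul, hza, hzb, norm_mul, norm_mul, norm_mul, Complex.norm_real, Real.norm_eq_abs,
        Complex.norm_real, Real.norm_eq_abs, Complex.norm_real, Real.norm_eq_abs, hEabs, mul_one, abs_of_pos hr,
        abs_of_pos ha, abs_of_pos hb]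
    have hreal : r * (r * (a * X) * (b * Y))⁻¹ = (a*b)⁻¹ * (X*Y)⁻¹ := by
      rw [show r * (a*X) * (b*Y) = r * ((a*b) * (X*Y)) from by ring, mul_inv, ← mul_assoc,
        mul_inv_cancel₀ hr.ne', one_mul, mul_inv]
    rw [habs, ← ENNReal.ofReal_mul hr.le, hreal, ENNReal.ofReal_mul (by positivity), hKdef]
  have hcont : Continuous fun p : ℝ × ℝ => Complex.polarCoord.symm p := by
    simp only [Complex.polarCoord_symm_apply]
    fun_prop
  have hF2m : Measurable fun p : ℝ × ℝ => ENNReal.ofReal p.1 * ENNReal.ofReal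
      ((‖(Complex.polarCoord.symm p) * ((Complex.polarCoord.symm p) - (a:ℂ)) *
        ((Complex.polarCoord.symm p) + (b:ℂ))‖)⁻¹) := by
    apply Measurable.fun_mul
    · exact measurable_fst.ennreal_ofReal
    · have : Continuous fun p : ℝ × ℝ => ‖(Complex.polarCoord.symm p) *
          ((Complex.polarCoord.symm p) - (a:ℂ)) * ((Complex.polarCoord.symm p) + (b:ℂ))‖ :=
        continuous_norm.comp
          (((hcont.mul (hcont.sub continuous_const)).mul (hcont.add continuous_const)))
      exact this.measurable.inv.ennreal_ofReal
  rw [← myC_lintegral_comp_polarCoord_symm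
    (fun z => ENNReal.ofReal ((‖z * (z - (a:ℂ)) * (z + (b:ℂ))‖)⁻¹)),
    polarCoord_target]
  have hprod : ∫⁻ p in Set.Ioi (0:ℝ) ×ˢ Set.Ioo (-π) π, ENNReal.ofReal p.1 * ENNReal.ofReal
        ((‖(Complex.polarCoord.symm p) * ((Complex.polarCoord.symm p) - (a:ℂ)) *
          ((Complex.polarCoord.symm p) + (b:ℂ))‖)⁻¹)
      = ∫⁻ r in Set.Ioi (0:ℝ), ∫⁻ θ in Set.Ioo (-π) π, (ENNReal.ofReal r * ENNReal.ofReal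
        ((‖(Complex.polarCoord.symm (r, θ)) *
          ((Complex.polarCoord.symm (r, θ)) - (a:ℂ)) *
          ((Complex.polarCoord.symm (r, θ)) + (b:ℂ))‖)⁻¹)) := by
    rw [show (volume : Measure (ℝ×ℝ)).restrict (Set.Ioi (0:ℝ) ×ˢ Set.Ioo (-π) π)
        = (volume.restrict (Set.Ioi (0:ℝ))).prod (volume.restrict (Set.Ioo (-π) π)) from by
      rw [Measure.prod_restrict, ← Measure.volume_eq_prod]]
    exact lintegral_prod _ hF2m.aemeasurable
  rw [hprod]
  have hinner : ∀ r ∈ Set.Ioi (0:ℝ), (∫⁻ θ in Set.Ioo (-π) π, (ENNReal.ofReal r * ENNReal.ofReal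
        ((‖(Complex.polarCoord.symm (r, θ)) *
          ((Complex.polarCoord.symm (r, θ)) - (a:ℂ)) *
          ((Complex.polarCoord.symm (r, θ)) + (b:ℂ))‖)⁻¹)))
      = ENNReal.ofReal ((a*b)⁻¹) * Ffun (r/a) (r/b) := by
    intro r hr
    have hKm : Measurable (K r) := by
      have : Continuous fun θ : ℝ =>
          (‖(r/a : ℝ) * Complex.exp (Complex.I * θ) - 1‖ *
           ‖(r/b : ℝ) * Complex.exp (Complex.I * θ) + 1‖) :=
        ((continuous_norm.comp (by fun_prop)).mul
          (continuous_norm.comp (by fun_prop)))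
      exact this.measurable.inv.ennreal_ofReal
    have hper : ∀ θ, K r (θ + 2*π) = K r θ := by
      intro θ
      have he : Complex.I * ((θ + 2*π : ℝ) : ℂ) = Complex.I * θ + 2*π*Complex.I := by
        push_cast; ring
      rw [hKdef]
      simp only [he, Complex.exp_add, Complex.exp_two_pi_mul_I, mul_one]
    have step1 : (∫⁻ θ in Set.Ioo (-π) π, (ENNReal.ofReal r * ENNReal.ofReal
        ((‖(Complex.polarCoord.symm (r, θ)) *
          ((Complex.polarCoord.symm (r, θ)) - (a:ℂ)) *
          ((Complex.polarCoord.symm (r, θ)) + (b:ℂ))‖)⁻¹)))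
        = ∫⁻ θ in Set.Ioo (-π) π, (ENNReal.ofReal ((a*b)⁻¹) * K r θ) := by
      refine setLIntegral_congr_fun measurableSet_Ioo
        (fun θ _ => ?_)
      rw [hsymm r θ]
      exact hpoint r hr θ
    rw [step1, lintegral_const_mul' _ _ ENNReal.ofReal_ne_top, lintegral_Ioo_shift _ hKm hper]
    rfl
  rw [setLIntegral_congr_fun measurableSet_Ioi hinner,
    lintegral_const_mul' _ _ ENNReal.ofReal_ne_top]


theorem stmt9 (a b : ℝ) (ha : 0 < a) (hb : 0 < b) :
    Integrable
      (fun z : ℂ => ‖z * (z - (a:ℂ)) * (z + (b:ℂ))‖⁻¹) volume ∧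
    (∫ z : ℂ, ‖z * (z - (a:ℂ)) * (z + (b:ℂ))‖⁻¹)
      = (1 / (a * b)) * ∫ r in Set.Ioi (0:ℝ), (Ffun (r / a) (r / b)).toReal := by
  have hint := integrable_invP a b ha hb
  refine ⟨hint, ?_⟩
  have h0 : 0 ≤ᵐ[volume] fun z : ℂ => (‖z * (z - (a:ℂ)) * (z + (b:ℂ))‖)⁻¹ :=
    Filter.Eventually.of_forall fun z => inv_nonneg.2 (norm_nonneg _)
  have hL : (∫ z : ℂ, (‖z * (z - (a:ℂ)) * (z + (b:ℂ))‖)⁻¹)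
      = (∫⁻ z : ℂ, ENNReal.ofReal ((‖z * (z - (a:ℂ)) * (z + (b:ℂ))‖)⁻¹)).toReal :=
    integral_eq_lintegral_of_nonneg_ae h0 hint.aestronglyMeasurable
  have hkey := key_lintegral a b ha hb
  have hfin : (∫⁻ z : ℂ, ENNReal.ofReal ((‖z * (z - (a:ℂ)) * (z + (b:ℂ))‖)⁻¹)) < ⊤ := by
    have h1 : (∫⁻ z : ℂ, ENNReal.ofReal ((‖z * (z - (a:ℂ)) * (z + (b:ℂ))‖)⁻¹))
        = ∫⁻ z : ℂ, ‖(‖z * (z - (a:ℂ)) * (z + (b:ℂ))‖)⁻¹‖ₑ :=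
      lintegral_congr fun z =>
        (Real.enorm_eq_ofReal (inv_nonneg.2 (norm_nonneg _))).symm
    rw [h1]
    exact hint.hasFiniteIntegral
  have hIfin : (∫⁻ r in Set.Ioi (0:ℝ), Ffun (r/a) (r/b)) < ⊤ := by
    by_contra h
    rw [not_lt, top_le_iff] at h
    rw [h, ENNReal.mul_top (ENNReal.ofReal_pos.2 (by positivity)).ne'] at hkey
    exact absurd hkey hfin.ne
  have hFm : Measurable fun r : ℝ => Ffun (r/a) (r/b) := by
    have hK2 : Measurable (Function.uncurry fun r θ : ℝ =>
        ENNReal.ofReal ((‖(r/a : ℝ) * Complex.exp (Complex.I * θ) - 1‖ *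
          ‖(r/b : ℝ) * Complex.exp (Complex.I * θ) + 1‖)⁻¹)) := by
      have : Continuous fun p : ℝ × ℝ =>
          (‖(p.1/a : ℝ) * Complex.exp (Complex.I * p.2) - 1‖ *
           ‖(p.1/b : ℝ) * Complex.exp (Complex.I * p.2) + 1‖) :=
        ((continuous_norm.comp (by fun_prop)).mul
          (continuous_norm.comp (by fun_prop)))
      exact this.measurable.inv.ennreal_ofReal
    exact hK2.lintegral_prod_right
  have hae : ∀ᵐ r ∂(volume.restrict (Set.Ioi (0:ℝ))), Ffun (r/a) (r/b) < ⊤ :=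
    ae_lt_top hFm hIfin.ne
  have hR : (∫ r in Set.Ioi (0:ℝ), (Ffun (r/a) (r/b)).toReal)
      = (∫⁻ r in Set.Ioi (0:ℝ), Ffun (r/a) (r/b)).toReal :=
    integral_toReal hFm.aemeasurable hae
  rw [hL, hkey, hR, ENNReal.toReal_mul, ENNReal.toReal_ofReal (by positivity), one_div]
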